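/- Let G be an ISK4-free graph, let P be a flat path of length at least 2 in G, and let G' be the graph obtained from G by deleting the interior of P and adding an edge between its two ends. Then G' is ISK4-free. -/

import Mathlib

open SimpleGraph

/-- A witness that the graph `H` is (exactly) a subdivision of `K₄`: four distinct branch
vertices joined by six internally disjoint paths of length at least one, covering all
vertices and edges of `H`. -/
structure K4Subdivision {W : Type*} (H : SimpleGraph W) : Type _ where
  b : Fin 4 → W
  inj : Function.Injective b
  p : ∀ i j : Fin 4, i < j → H.Walk (b i) (b j)
  isPath : ∀ (i j : Fin 4) (h : i < j), (p i j h).IsPath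
  len : ∀ (i j : Fin 4) (h : i < j), 1 ≤ (p i j h).length
  disj : ∀ (i j : Fin 4) (h : i < j), ∀ (k l : Fin 4) (h' : k < l), (i, j) ≠ (k, l) → ∀ v,
      v ∈ (p i j h).support → v ∈ (p k l h').support → v = b i ∨ v = b j
  coverV : ∀ v, ∃ (i j : Fin 4) (h : i < j), v ∈ (p i j h).support
  coverE : ∀ e ∈ H.edgeSet, ∃ (i j : Fin 4) (h : i < j), e ∈ (p i j h).edges

/-- A graph is ISK4-free if no induced subgraph is a subdivision of `K₄`. -/
def ISK4Free {V : Type*} (G : SimpleGraph V) : Prop :=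
  ∀ s : Set V, IsEmpty (K4Subdivision (G.induce s))

/-- `G` has no induced `K_{3,3}`. -/
def K33Free {V : Type*} (G : SimpleGraph V) : Prop :=
  IsEmpty (completeBipartiteGraph (Fin 3) (Fin 3) ↪g G)

/-- `G` has no induced `K_{2,2,2}` (octahedron). -/
def K222Free {V : Type*} (G : SimpleGraph V) : Prop :=
  IsEmpty (completeMultipartiteGraph (fun _ : Fin 3 => Fin 2) ↪g G)

/-- A witness that `H` is (exactly) a prism: three vertex-disjoint paths of length at least
one whose ends form two triangles, with no other edges. -/
structure PrismStruct {W : Type*} (H : SimpleGraph W) : Type _ where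
  a : Fin 3 → W
  b : Fin 3 → W
  p : ∀ i, H.Walk (a i) (b i)
  isPath : ∀ i, (p i).IsPath
  len : ∀ i, 1 ≤ (p i).length
  triA : ∀ i j, i ≠ j → H.Adj (a i) (a j)
  triB : ∀ i j, i ≠ j → H.Adj (b i) (b j)
  disj : ∀ i j, i ≠ j → ∀ v, v ∈ (p i).support → v ∉ (p j).support
  coverV : ∀ v, ∃ i, v ∈ (p i).support
  coverE : ∀ e ∈ H.edgeSet, (∃ i, e ∈ (p i).edges) ∨
      (∃ i j, i ≠ j ∧ e = s(a i, a j)) ∨ (∃ i j, i ≠ j ∧ e = s(b i, b j))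

/-- `G` has no induced prism. -/
def PrismFree {V : Type*} (G : SimpleGraph V) : Prop :=
  ∀ s : Set V, IsEmpty (PrismStruct (G.induce s))

/-- `C` is the vertex set of a hole (an induced cycle on at least four vertices) of `G`. -/
def IsHole {V : Type*} (G : SimpleGraph V) (C : Set V) : Prop :=
  ∃ (v : V) (w : G.Walk v v), w.IsCycle ∧ 4 ≤ w.length ∧
    (∀ x, x ∈ C ↔ x ∈ w.support) ∧
    (∀ x ∈ C, ∀ y ∈ C, G.Adj x y → s(x, y) ∈ w.edges)

/-- `G` contains no induced boat: no hole together with a vertex having exactly four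
consecutive neighbours on the hole. -/
def BoatFree {V : Type*} (G : SimpleGraph V) : Prop :=
  ¬ ∃ (C : Set V) (v v₀ x₁ x₂ x₃ x₄ : V) (w : G.Walk v₀ v₀),
      w.IsCycle ∧ 4 ≤ w.length ∧ (∀ x, x ∈ C ↔ x ∈ w.support) ∧
      (∀ x ∈ C, ∀ y ∈ C, G.Adj x y → s(x, y) ∈ w.edges) ∧
      v ∉ C ∧ [x₁, x₂, x₃, x₄].Nodup ∧
      s(x₁, x₂) ∈ w.edges ∧ s(x₂, x₃) ∈ w.edges ∧ s(x₃, x₄) ∈ w.edges ∧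
      {x ∈ C | G.Adj v x} = {x₁, x₂, x₃, x₄}

/-- `G` contains no induced 4-wheel: no induced four-cycle together with a vertex adjacent
to all four of its vertices. -/
def FourWheelFree {V : Type*} (G : SimpleGraph V) : Prop :=
  ¬ ∃ v a b c d : V, a ≠ b ∧ a ≠ c ∧ a ≠ d ∧ b ≠ c ∧ b ≠ d ∧ c ≠ d ∧
      G.Adj a b ∧ G.Adj b c ∧ G.Adj c d ∧ G.Adj d a ∧ ¬ G.Adj a c ∧ ¬ G.Adj b d ∧
      G.Adj v a ∧ G.Adj v b ∧ G.Adj v c ∧ G.Adj v d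

/-- The subgraph of `G` induced on `T` is a confluence of `{x, y, z}`. -/
def IsConfluence {V : Type*} (G : SimpleGraph V) (T : Set V) (x y z : V) : Prop :=
  (∃ (c : V) (px : G.Walk c x) (py : G.Walk c y) (pz : G.Walk c z),
    px.IsPath ∧ py.IsPath ∧ pz.IsPath ∧
    (∀ v, v ∈ px.support → v ∈ py.support → v = c) ∧
    (∀ v, v ∈ px.support → v ∈ pz.support → v = c) ∧
    (∀ v, v ∈ py.support → v ∈ pz.support → v = c) ∧
    (∀ v, v ∈ T ↔ (v ∈ px.support ∨ v ∈ py.support ∨ v ∈ pz.support)) ∧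
    (∀ a ∈ T, ∀ b ∈ T, G.Adj a b →
      s(a, b) ∈ px.edges ∨ s(a, b) ∈ py.edges ∨ s(a, b) ∈ pz.edges))
  ∨
  (∃ (x' y' z' : V) (px : G.Walk x' x) (py : G.Walk y' y) (pz : G.Walk z' z),
    px.IsPath ∧ py.IsPath ∧ pz.IsPath ∧
    G.Adj x' y' ∧ G.Adj y' z' ∧ G.Adj x' z' ∧
    (∀ v, v ∈ px.support → v ∉ py.support) ∧
    (∀ v, v ∈ px.support → v ∉ pz.support) ∧
    (∀ v, v ∈ py.support → v ∉ pz.support) ∧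
    (∀ v, v ∈ T ↔ (v ∈ px.support ∨ v ∈ py.support ∨ v ∈ pz.support)) ∧
    (∀ a ∈ T, ∀ b ∈ T, G.Adj a b →
      s(a, b) ∈ px.edges ∨ s(a, b) ∈ py.edges ∨ s(a, b) ∈ pz.edges ∨
      s(a, b) = s(x', y') ∨ s(a, b) = s(y', z') ∨ s(a, b) = s(x', z')))

open scoped Classical
namespace ISK4Aux

variable {V : Type*} {G : SimpleGraph V}

/-- An appended walk of two paths meeting only at the joint is a path. -/
lemma append_isPath {x y z : V} {p : G.Walk x y} {q : G.Walk y z}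
    (hp : p.IsPath) (hq : q.IsPath)
    (hmeet : ∀ v, v ∈ p.support → v ∈ q.support → v = y) : (p.append q).IsPath := by
  rw [Walk.isPath_def, Walk.support_append, List.nodup_append]
  refine ⟨hp.support_nodup, ?_, ?_⟩
  · have := hq.support_nodup
    rw [q.support_eq_cons] at this
    exact this.of_cons
  · intro v hv v' hv' hvv'
    subst hvv'
    have hvq : v ∈ q.support := by
      rw [q.support_eq_cons]; exact List.mem_cons_of_mem _ hv'
    have hvy := hmeet v hv hvq
    subst hvy
    have := hq.support_nodup
    rw [q.support_eq_cons] at this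
    exact (List.nodup_cons.mp this).1 hv'

/-- A nonconstant walk contains an edge at its last vertex. -/
lemma exists_edge_end {x y : V} (w : G.Walk x y) (hxy : x ≠ y) : ∃ u, s(u, y) ∈ w.edges := by
  induction w with
  | nil => exact absurd rfl hxy
  | cons h w ih =>
    rename_i a c d
    by_cases hc : c = d
    · subst hc
      exact ⟨a, by simp⟩
    · obtain ⟨u, hu⟩ := ih hc
      exact ⟨u, by simp [hu]⟩

/-- A nonconstant walk contains an edge at its first vertex. -/
lemma exists_edge_start {x y : V} (w : G.Walk x y) (hxy : x ≠ y) : ∃ u, s(x, u) ∈ w.edges := by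
  obtain ⟨u, hu⟩ := exists_edge_end w.reverse (Ne.symm hxy)
  refine ⟨u, ?_⟩
  rw [Walk.edges_reverse, List.mem_reverse] at hu
  rwa [Sym2.eq_swap]

/-- Push a walk whose support lies in `u` down to the induced subgraph on `u`. -/
def induceWalk {u : Set V} : ∀ {x y : V} (w : G.Walk x y),
    (∀ v ∈ w.support, v ∈ u) → ∀ (hx : x ∈ u) (hy : y ∈ u),
    (G.induce u).Walk ⟨x, hx⟩ ⟨y, hy⟩
  | _, _, Walk.nil, _, _, _ => Walk.nil
  | _, _, Walk.cons h w, hw, hx, hy =>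
    Walk.cons (by exact h) (induceWalk w (fun v hv => hw v (by simp [hv])) (hw _ (by simp)) hy)

lemma induceWalk_support {u : Set V} : ∀ {x y : V} (w : G.Walk x y)
    (hw : ∀ v ∈ w.support, v ∈ u) (hx : x ∈ u) (hy : y ∈ u),
    (induceWalk w hw hx hy).support.map Subtype.val = w.support
  | _, _, Walk.nil, _, _, _ => by simp [induceWalk]
  | _, _, Walk.cons h w, hw, hx, hy => by
    simp only [induceWalk, Walk.support_cons, List.map_cons]
    exact congrArg (List.cons _) (induceWalk_support w _ _ hy)

lemma induceWalk_edges {u : Set V} : ∀ {x y : V} (w : G.Walk x y)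
    (hw : ∀ v ∈ w.support, v ∈ u) (hx : x ∈ u) (hy : y ∈ u),
    (induceWalk w hw hx hy).edges.map (Sym2.map Subtype.val) = w.edges
  | _, _, Walk.nil, _, _, _ => by simp [induceWalk]
  | _, _, Walk.cons h w, hw, hx, hy => by
    simp only [induceWalk, Walk.edges_cons, List.map_cons]
    exact congrArg (List.cons _) (induceWalk_edges w _ _ hy)

lemma induceWalk_length {u : Set V} : ∀ {x y : V} (w : G.Walk x y)
    (hw : ∀ v ∈ w.support, v ∈ u) (hx : x ∈ u) (hy : y ∈ u),
    (induceWalk w hw hx hy).length = w.length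
  | _, _, Walk.nil, _, _, _ => by simp [induceWalk]
  | _, _, Walk.cons h w, hw, hx, hy => by
    simp only [induceWalk, Walk.length_cons]
    exact congrArg (· + 1) (induceWalk_length w _ _ hy)

lemma induceWalk_isPath {u : Set V} {x y : V} {w : G.Walk x y}
    (hw : ∀ v ∈ w.support, v ∈ u) (hx : x ∈ u) (hy : y ∈ u) (hp : w.IsPath) :
    (induceWalk w hw hx hy).IsPath := by
  rw [Walk.isPath_def]
  have h1 : ((induceWalk w hw hx hy).support.map Subtype.val).Nodup := by
    rw [induceWalk_support]; exact hp.support_nodup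
  exact h1.of_map _

lemma mem_induceWalk_support {u : Set V} {x y : V} {w : G.Walk x y}
    (hw : ∀ v ∈ w.support, v ∈ u) (hx : x ∈ u) (hy : y ∈ u) (v : u) :
    v ∈ (induceWalk w hw hx hy).support ↔ (v : V) ∈ w.support := by
  rw [← induceWalk_support w hw hx hy]
  constructor
  · exact fun h => List.mem_map_of_mem h
  · intro h
    obtain ⟨v', hv', he⟩ := List.mem_map.mp h
    rwa [← Subtype.val_injective he]

lemma mem_induceWalk_edges {u : Set V} {x y : V} {w : G.Walk x y}
    (hw : ∀ v ∈ w.support, v ∈ u) (hx : x ∈ u) (hy : y ∈ u) (e : Sym2 u) :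
    e ∈ (induceWalk w hw hx hy).edges ↔ Sym2.map Subtype.val e ∈ w.edges := by
  rw [← induceWalk_edges w hw hx hy]
  constructor
  · exact fun h => List.mem_map_of_mem h
  · intro h
    obtain ⟨e', he', he⟩ := List.mem_map.mp h
    rwa [← Sym2.map.injective Subtype.val_injective he]


/-- Replace each use of the extra edge `ab` in a walk of `G ⊔ {ab}` by the path `P`. -/
noncomputable def unfoldWalk (P : G.Walk a b) :
    ∀ {x y : V}, (G ⊔ fromEdgeSet {s(a, b)}).Walk x y → G.Walk x y
  | _, _, Walk.nil => Walk.nil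
  | x, _, Walk.cons (v := z) h w =>
    if hab : x = a ∧ z = b then (P.copy hab.1.symm hab.2.symm).append (unfoldWalk P w)
    else if hba : x = b ∧ z = a then
      (P.reverse.copy hba.1.symm hba.2.symm).append (unfoldWalk P w)
    else Walk.cons (by
      rcases h with h | h
      · exact h
      · rw [fromEdgeSet_adj] at h
        simp only [Set.mem_singleton_iff, Sym2.eq, Sym2.rel_iff', Prod.mk.injEq,
          Prod.swap_prod_mk] at h
        rcases h.1 with ⟨h1, h2⟩ | ⟨h1, h2⟩
        · exact absurd ⟨h1, h2⟩ hab
        · exact absurd ⟨h1, h2⟩ hba) (unfoldWalk P w)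

lemma unfoldWalk_support (P : G.Walk a b) :
    ∀ {x y : V} (w : (G ⊔ fromEdgeSet {s(a, b)}).Walk x y),
    ∀ v ∈ (unfoldWalk P w).support,
      v ∈ w.support ∨ (v ∈ P.support ∧ a ∈ w.support ∧ b ∈ w.support)
  | _, _, Walk.nil => by simp [unfoldWalk]
  | x, y, Walk.cons (v := z) h w => by
    intro v hv
    simp only [unfoldWalk] at hv
    have hmema : ∀ (hxa : x = a), a ∈ (Walk.cons h w).support := fun hxa => by
      rw [Walk.support_cons]; exact List.mem_cons.mpr (Or.inl hxa.symm)
    have hmemb : ∀ (hzb : z = b), b ∈ (Walk.cons h w).support := fun hzb => by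
      rw [Walk.support_cons]; exact List.mem_cons.mpr (Or.inr (hzb ▸ w.start_mem_support))
    have hmema' : ∀ (hza : z = a), a ∈ (Walk.cons h w).support := fun hza => by
      rw [Walk.support_cons]; exact List.mem_cons.mpr (Or.inr (hza ▸ w.start_mem_support))
    have hmemb' : ∀ (hxb : x = b), b ∈ (Walk.cons h w).support := fun hxb => by
      rw [Walk.support_cons]; exact List.mem_cons.mpr (Or.inl hxb.symm)
    have htail : ∀ hv' : v ∈ (unfoldWalk P w).support,
        v ∈ (Walk.cons h w).support ∨ (v ∈ P.support ∧ a ∈ (Walk.cons h w).support ∧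
          b ∈ (Walk.cons h w).support) := by
      intro hv'
      rcases unfoldWalk_support P w v hv' with hv'' | ⟨h1, h2, h3⟩
      · exact Or.inl (by rw [Walk.support_cons]; exact List.mem_cons.mpr (Or.inr hv''))
      · refine Or.inr ⟨h1, ?_, ?_⟩ <;> rw [Walk.support_cons]
        · exact List.mem_cons.mpr (Or.inr h2)
        · exact List.mem_cons.mpr (Or.inr h3)
    split_ifs at hv with hab hba
    · rw [Walk.mem_support_append_iff] at hv
      rcases hv with hv | hv
      · rw [Walk.support_copy] at hv
        exact Or.inr ⟨hv, hmema hab.1, hmemb hab.2⟩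
      · exact htail hv
    · rw [Walk.mem_support_append_iff] at hv
      rcases hv with hv | hv
      · rw [Walk.support_copy, Walk.support_reverse, List.mem_reverse] at hv
        exact Or.inr ⟨hv, hmema' hba.2, hmemb' hba.1⟩
      · exact htail hv
    · rw [Walk.support_cons, List.mem_cons] at hv
      rcases hv with hv | hv
      · exact Or.inl (by rw [Walk.support_cons]; exact List.mem_cons.mpr (Or.inl hv))
      · exact htail hv

lemma support_subset_unfoldWalk (P : G.Walk a b) :
    ∀ {x y : V} (w : (G ⊔ fromEdgeSet {s(a, b)}).Walk x y),
    ∀ v ∈ w.support, v ∈ (unfoldWalk P w).support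
  | _, _, Walk.nil => by simp [unfoldWalk]
  | x, y, Walk.cons (v := z) h w => by
    intro v hv
    rw [Walk.support_cons, List.mem_cons] at hv
    simp only [unfoldWalk]
    split_ifs with hab hba
    · rw [Walk.mem_support_append_iff]
      rcases hv with hv | hv
      · refine Or.inl ?_
        rw [Walk.support_copy]
        rw [hv, hab.1]
        exact P.start_mem_support
      · exact Or.inr (support_subset_unfoldWalk P w v hv)
    · rw [Walk.mem_support_append_iff]
      rcases hv with hv | hv
      · refine Or.inl ?_
        rw [Walk.support_copy, Walk.support_reverse, List.mem_reverse]
        rw [hv, hba.1]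
        exact P.end_mem_support
      · exact Or.inr (support_subset_unfoldWalk P w v hv)
    · rw [Walk.support_cons, List.mem_cons]
      rcases hv with hv | hv
      · exact Or.inl hv
      · exact Or.inr (support_subset_unfoldWalk P w v hv)

lemma edges_subset_unfoldWalk (P : G.Walk a b) :
    ∀ {x y : V} (w : (G ⊔ fromEdgeSet {s(a, b)}).Walk x y),
    ∀ e ∈ w.edges, e ≠ s(a, b) → e ∈ (unfoldWalk P w).edges
  | _, _, Walk.nil => by simp [unfoldWalk]
  | x, y, Walk.cons (v := z) h w => by
    intro e he hne
    rw [Walk.edges_cons, List.mem_cons] at he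
    simp only [unfoldWalk]
    split_ifs with hab hba
    · rcases he with he | he
      · exact absurd (by rw [he, hab.1, hab.2]) hne
      · rw [Walk.edges_append, List.mem_append]
        exact Or.inr (edges_subset_unfoldWalk P w e he hne)
    · rcases he with he | he
      · exact absurd (by rw [he, hba.1, hba.2, Sym2.eq_swap]) hne
      · rw [Walk.edges_append, List.mem_append]
        exact Or.inr (edges_subset_unfoldWalk P w e he hne)
    · rw [Walk.edges_cons, List.mem_cons]
      rcases he with he | he
      · exact Or.inl he
      · exact Or.inr (edges_subset_unfoldWalk P w e he hne)

lemma unfoldWalk_of_mem_edge (P : G.Walk a b) :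
    ∀ {x y : V} (w : (G ⊔ fromEdgeSet {s(a, b)}).Walk x y), s(a, b) ∈ w.edges →
      (∀ v ∈ P.support, v ∈ (unfoldWalk P w).support) ∧
      (∀ e ∈ P.edges, e ∈ (unfoldWalk P w).edges)
  | _, _, Walk.nil => by simp [unfoldWalk]
  | x, y, Walk.cons (v := z) h w => by
    intro he
    rw [Walk.edges_cons, List.mem_cons] at he
    simp only [unfoldWalk]
    split_ifs with hab hba
    · constructor
      · intro v hv
        rw [Walk.mem_support_append_iff]
        exact Or.inl (by rw [Walk.support_copy]; exact hv)
      · intro e hv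
        rw [Walk.edges_append, List.mem_append]
        exact Or.inl (by rw [Walk.edges_copy]; exact hv)
    · constructor
      · intro v hv
        rw [Walk.mem_support_append_iff]
        refine Or.inl ?_
        rw [Walk.support_copy, Walk.support_reverse, List.mem_reverse]
        exact hv
      · intro e hv
        rw [Walk.edges_append, List.mem_append]
        refine Or.inl ?_
        rw [Walk.edges_copy, Walk.edges_reverse, List.mem_reverse]
        exact hv
    · have he' : s(a, b) ∈ w.edges := by
        rcases he with he | he
        · exfalso
          rw [Sym2.eq_iff] at he
          rcases he with ⟨h1, h2⟩ | ⟨h1, h2⟩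
          · exact hab ⟨h1.symm, h2.symm⟩
          · exact hba ⟨h2.symm, h1.symm⟩
        · exact he
      obtain ⟨h1, h2⟩ := unfoldWalk_of_mem_edge P w he'
      constructor
      · intro v hv
        rw [Walk.support_cons, List.mem_cons]
        exact Or.inr (h1 v hv)
      · intro e hv
        rw [Walk.edges_cons, List.mem_cons]
        exact Or.inr (h2 e hv)

lemma length_le_unfoldWalk (P : G.Walk a b) :
    ∀ {x y : V} (w : (G ⊔ fromEdgeSet {s(a, b)}).Walk x y),
      1 ≤ P.length → w.length ≤ (unfoldWalk P w).length
  | _, _, Walk.nil => by simp [unfoldWalk]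
  | x, y, Walk.cons (v := z) h w => by
    intro hlen
    simp only [unfoldWalk]
    split_ifs with hab hba
    · rw [Walk.length_append, Walk.length_copy, Walk.length_cons]
      have := length_le_unfoldWalk P w hlen
      omega
    · rw [Walk.length_append, Walk.length_copy, Walk.length_reverse, Walk.length_cons]
      have := length_le_unfoldWalk P w hlen
      omega
    · rw [Walk.length_cons, Walk.length_cons]
      have := length_le_unfoldWalk P w hlen
      omega



lemma unfoldWalk_isPath (P : G.Walk a b) (hP : P.IsPath) :
    ∀ {x y : V} (w : (G ⊔ fromEdgeSet {s(a, b)}).Walk x y), w.IsPath →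
      (∀ v ∈ w.support, v ∉ P.support ∨ v = a ∨ v = b) → (unfoldWalk P w).IsPath
  | _, _, Walk.nil => fun _ _ => by simp [unfoldWalk]
  | x, y, Walk.cons (v := z) h w => by
    intro hw hs
    have hw' : w.IsPath := ((Walk.cons_isPath_iff h w).mp hw).1
    have hxns : x ∉ w.support := ((Walk.cons_isPath_iff h w).mp hw).2
    have hs' : ∀ v ∈ w.support, v ∉ P.support ∨ v = a ∨ v = b := fun v hv =>
      hs v (by rw [Walk.support_cons]; exact List.mem_cons.mpr (Or.inr hv))
    have ih := unfoldWalk_isPath P hP w hw' hs'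
    simp only [unfoldWalk]
    split_ifs with hab hba
    · obtain ⟨hxa, hzb⟩ := hab
      have haw : a ∉ w.support := hxa ▸ hxns
      refine append_isPath ((Walk.isPath_copy P _ _).mpr hP) ih ?_
      intro v hv1 hv2
      rw [Walk.support_copy] at hv1
      rcases unfoldWalk_support P w v hv2 with hv2' | ⟨_, h2, _⟩
      · rcases hs' v hv2' with hnp | heq | heq
        · exact absurd hv1 hnp
        · exact absurd (heq ▸ hv2') haw
        · exact heq.trans hzb.symm
      · exact absurd h2 haw
    · obtain ⟨hxb, hza⟩ := hba
      have hbw : b ∉ w.support := hxb ▸ hxns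
      refine append_isPath ((Walk.isPath_copy P.reverse _ _).mpr hP.reverse) ih ?_
      intro v hv1 hv2
      rw [Walk.support_copy, Walk.support_reverse, List.mem_reverse] at hv1
      rcases unfoldWalk_support P w v hv2 with hv2' | ⟨_, _, h3⟩
      · rcases hs' v hv2' with hnp | heq | heq
        · exact absurd hv1 hnp
        · exact heq.trans hza.symm
        · exact absurd (heq ▸ hv2') hbw
      · exact absurd h3 hbw
    · refine Walk.IsPath.cons ih ?_
      intro hx
      rcases unfoldWalk_support P w x hx with hx' | ⟨h1, h2, h3⟩
      · exact hxns hx'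
      · rcases hs x (by rw [Walk.support_cons]; exact List.mem_cons.mpr (Or.inl rfl))
          with hnp | heq | heq
        · exact hnp h1
        · exact hxns (heq.symm ▸ h2)
        · exact hxns (heq.symm ▸ h3)

lemma path_ne_of_two_le_length {x y : V} (P : G.Walk x y) (hP : P.IsPath)
    (hlen : 2 ≤ P.length) : x ≠ y := by
  intro heq
  subst heq
  cases P with
  | nil => simp at hlen
  | cons h q =>
    have h1 : x ∉ q.support := ((Walk.cons_isPath_iff h q).mp hP).2
    exact h1 q.end_mem_support

lemma edge_ends_not_mem {x y : V} (P : G.Walk x y) (hP : P.IsPath)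
    (hlen : 2 ≤ P.length) : s(x, y) ∉ P.edges := by
  cases P with
  | nil => simp
  | cons h q =>
    rename_i z
    have hq : q.IsPath := ((Walk.cons_isPath_iff h q).mp hP).1
    have hxq : x ∉ q.support := ((Walk.cons_isPath_iff h q).mp hP).2
    intro he
    rw [Walk.edges_cons, List.mem_cons] at he
    rcases he with he | he
    · rw [Sym2.eq_iff] at he
      rcases he with ⟨-, hyz⟩ | ⟨hxz, -⟩
      · -- z = y, so q : Walk y y is a nontrivial path
        subst hyz
        cases q with
        | nil => simp at hlen
        | cons h' q' =>
          have : y ∉ q'.support := ((Walk.cons_isPath_iff h' q').mp hq).2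
          exact this q'.end_mem_support
      · exact hxq (hxz ▸ q.start_mem_support)
    · exact hxq (q.fst_mem_support_of_mem_edges he)

/-- Every edge of `G` at an interior vertex of the flat path `P` is an edge of `P`. -/
lemma flat_interior_edges (P : G.Walk a b) (hP : P.IsPath)
    (v : V) (hv : v ∈ P.support) (hva : v ≠ a) (hvb : v ≠ b)
    (hdeg : (G.neighborSet v).encard = 2) :
    ∀ w, G.Adj v w → s(v, w) ∈ P.edges := by
  obtain ⟨u1, hu1⟩ := exists_edge_end (P.takeUntil v hv) (Ne.symm hva)
  obtain ⟨u2, hu2⟩ := exists_edge_start (P.dropUntil v hv) hvb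
  have hu1P : s(u1, v) ∈ P.edges := P.edges_takeUntil_subset hv hu1
  have hu2P : s(v, u2) ∈ P.edges := P.edges_dropUntil_subset hv hu2
  have hadj1 : G.Adj u1 v := P.adj_of_mem_edges hu1P
  have hadj2 : G.Adj v u2 := P.adj_of_mem_edges hu2P
  have hne12 : u1 ≠ u2 := by
    intro heq
    subst heq
    have hc1 : u1 ∈ (P.takeUntil v hv).support :=
      (P.takeUntil v hv).fst_mem_support_of_mem_edges hu1
    have hc2 : u1 ∈ (P.dropUntil v hv).support :=
      (P.dropUntil v hv).snd_mem_support_of_mem_edges hu2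
    have hnodup : ((P.takeUntil v hv).support ++ (P.dropUntil v hv).support.tail).Nodup := by
      rw [← Walk.support_append, Walk.take_spec]
      exact hP.support_nodup
    have hu1v : u1 ≠ v := hadj1.ne
    have hc2' : u1 ∈ (P.dropUntil v hv).support.tail := by
      rcases (Walk.mem_support_iff _).mp hc2 with h | h
      · exact absurd h hu1v
      · exact h
    exact (List.disjoint_of_nodup_append hnodup) hc1 hc2'
  have hsub : ({u1, u2} : Set V) ⊆ G.neighborSet v := by
    rintro w (rfl | rfl)
    · exact hadj1.symm
    · exact hadj2
  have heq : ({u1, u2} : Set V) = G.neighborSet v := by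
    refine Set.Finite.eq_of_subset_of_encard_le (Set.toFinite _) hsub ?_
    rw [hdeg, Set.encard_pair hne12]
  intro w hw
  have : w ∈ ({u1, u2} : Set V) := by rw [heq]; exact hw
  rcases this with rfl | rfl
  · rwa [Sym2.eq_swap]
  · exact hu2P


end ISK4Aux


/-- Reducing a flat path of length at least 2 (deleting its interior and adding an edge
between its two ends) preserves ISK4-freeness. -/
theorem isk4Free_of_reduce_flat_path {V : Type*} (G : SimpleGraph V) (hG : ISK4Free G)
    (a b : V) (P : G.Walk a b) (hP : P.IsPath) (hlen : 2 ≤ P.length)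
    (hind : ∀ x ∈ P.support, ∀ y ∈ P.support, G.Adj x y → s(x, y) ∈ P.edges)
    (hflat : ∀ v ∈ P.support, v ≠ a → v ≠ b → (G.neighborSet v).encard = 2) :
    ISK4Free ((G ⊔ SimpleGraph.fromEdgeSet {s(a, b)}).induce
      {v | v ∉ P.support ∨ v = a ∨ v = b}) := by
  classical
  have hne : a ≠ b := ISK4Aux.path_ne_of_two_le_length P hP hlen
  have habAdj : ¬G.Adj a b := fun h =>
    ISK4Aux.edge_ends_not_mem P hP hlen (hind a P.start_mem_support b P.end_mem_support h)
  intro s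
  constructor
  intro X
  set Gb := G ⊔ SimpleGraph.fromEdgeSet {s(a, b)} with hGbdef
  let f : ((Gb.induce {v | v ∉ P.support ∨ v = a ∨ v = b}).induce s) ↪g Gb :=
    (SimpleGraph.Embedding.induce _).comp (SimpleGraph.Embedding.induce s)
  have hfval : ∀ x, f x = x.1.1 := fun _ => rfl
  have hfinj : Function.Injective f := f.injective
  set t : Set V := Set.range (fun x => (f x : V)) with htdef
  have htS' : ∀ c ∈ t, c ∉ P.support ∨ c = a ∨ c = b := by
    rintro c ⟨x, rfl⟩
    exact x.1.2
  set u : Set V := t ∪ {c | (a ∈ t ∧ b ∈ t) ∧ c ∈ P.support ∧ c ≠ a ∧ c ≠ b} with hudef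
  let w := fun (i j : Fin 4) (hij : i < j) => (X.p i j hij).map f.toHom
  have hmemw : ∀ (i j : Fin 4) (hij : i < j) (c : V),
      c ∈ (w i j hij).support ↔ ∃ x, x ∈ (X.p i j hij).support ∧ f x = c := by
    intro i j hij c
    rw [Walk.support_map, List.mem_map]
    rfl
  have hwt : ∀ (i j : Fin 4) (hij : i < j), ∀ c ∈ (w i j hij).support, c ∈ t := by
    intro i j hij c hc
    obtain ⟨x, -, hx⟩ := (hmemw i j hij c).mp hc
    exact ⟨x, hx⟩
  have hwS' : ∀ (i j : Fin 4) (hij : i < j),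
      ∀ c ∈ (w i j hij).support, c ∉ P.support ∨ c = a ∨ c = b := by
    intro i j hij c hc
    exact htS' c (hwt i j hij c hc)
  have hu : ∀ (i j : Fin 4) (hij : i < j),
      ∀ c ∈ (ISK4Aux.unfoldWalk P (w i j hij)).support, c ∈ u := by
    intro i j hij c hc
    rcases ISK4Aux.unfoldWalk_support P (w i j hij) c hc with hc' | ⟨h1, h2, h3⟩
    · exact Or.inl (hwt i j hij c hc')
    · have hat : a ∈ t := hwt i j hij a h2
      have hbt : b ∈ t := hwt i j hij b h3
      by_cases hca : c = a
      · exact Or.inl (hca ▸ hat)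
      · by_cases hcb : c = b
        · exact Or.inl (hcb ▸ hbt)
        · exact Or.inr ⟨⟨hat, hbt⟩, h1, hca, hcb⟩
  have hbu : ∀ i : Fin 4, (f (X.b i) : V) ∈ u := fun i => Or.inl ⟨X.b i, rfl⟩
  let bnew : Fin 4 → ↥u := fun i => ⟨f (X.b i), hbu i⟩
  let pnew := fun (i j : Fin 4) (hij : i < j) =>
    ISK4Aux.induceWalk (ISK4Aux.unfoldWalk P (w i j hij)) (hu i j hij) (hbu i) (hbu j)
  have habEdge : a ∈ t → b ∈ t →
      ∃ (i j : Fin 4) (hij : i < j), s(a, b) ∈ (w i j hij).edges := by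
    rintro ⟨xa, hxa⟩ ⟨xb, hxb⟩
    replace hxa : f xa = a := hxa
    replace hxb : f xb = b := hxb
    have hadj : ((Gb.induce {v | v ∉ P.support ∨ v = a ∨ v = b}).induce s).Adj xa xb := by
      show Gb.Adj (f xa) (f xb)
      rw [hxa, hxb]
      exact Or.inr ((SimpleGraph.fromEdgeSet_adj _).mpr ⟨rfl, hne⟩)
    obtain ⟨i, j, hij, he⟩ := X.coverE s(xa, xb) ((SimpleGraph.mem_edgeSet _).mpr hadj)
    refine ⟨i, j, hij, ?_⟩
    rw [Walk.edges_map]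
    have := List.mem_map_of_mem (f := Sym2.map f) he
    rw [Sym2.map_pair_eq, hxa, hxb] at this
    exact this
  refine (hG u).false ?_
  refine ⟨bnew, ?_, pnew, ?_, ?_, ?_, ?_, ?_⟩
  · -- inj
    intro i j hij
    have h2 := congrArg Subtype.val hij
    exact X.inj (hfinj h2)
  · -- isPath
    intro i j hij
    refine ISK4Aux.induceWalk_isPath _ _ _ ?_
    exact ISK4Aux.unfoldWalk_isPath P hP (w i j hij)
      (Walk.map_isPath_of_injective hfinj (X.isPath i j hij)) (hwS' i j hij)
  · -- len
    intro i j hij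
    rw [ISK4Aux.induceWalk_length]
    calc 1 ≤ (X.p i j hij).length := X.len i j hij
    _ = (w i j hij).length := (Walk.length_map _ _).symm
    _ ≤ _ := ISK4Aux.length_le_unfoldWalk P (w i j hij) (by omega)
  · -- disj
    intro i j hij k l hkl hne' v hv1 hv2
    rw [ISK4Aux.mem_induceWalk_support] at hv1 hv2
    have key : ∀ c : V, c ∈ (w i j hij).support → c ∈ (w k l hkl).support → (v : V) = c →
        v = bnew i ∨ v = bnew j := by
      intro c hc1 hc2 hvc
      obtain ⟨x1, hx1, hfx1⟩ := (hmemw i j hij c).mp hc1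
      obtain ⟨x2, hx2, hfx2⟩ := (hmemw k l hkl c).mp hc2
      have hx12 : x1 = x2 := hfinj (hfx1.trans hfx2.symm)
      rcases X.disj i j hij k l hkl hne' x1 hx1 (hx12 ▸ hx2) with hb | hb
      · exact Or.inl (Subtype.ext (by rw [hvc, ← hfx1, hb]))
      · exact Or.inr (Subtype.ext (by rw [hvc, ← hfx1, hb]))
    rcases ISK4Aux.unfoldWalk_support P (w i j hij) v hv1 with hc1 | ⟨hp1, ha1, hb1⟩
    · rcases ISK4Aux.unfoldWalk_support P (w k l hkl) v hv2 with hc2 | ⟨hp2, ha2, hb2⟩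
      · exact key v hc1 hc2 rfl
      · -- v ∈ w_ij.support, v ∈ P.support with a,b ∈ w_kl.support
        rcases htS' _ (hwt i j hij _ hc1) with hnp | hva | hvb
        · exact absurd hp2 hnp
        · exact key a (by have h := hc1; rwa [hva] at h) ha2 hva
        · exact key b (by have h := hc1; rwa [hvb] at h) hb2 hvb
    · rcases ISK4Aux.unfoldWalk_support P (w k l hkl) v hv2 with hc2 | ⟨hp2, ha2, hb2⟩
      · rcases htS' _ (hwt k l hkl _ hc2) with hnp | hva | hvb
        · exact absurd hp1 hnp
        · exact key a ha1 (by have h := hc2; rwa [hva] at h) hva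
        · exact key b hb1 (by have h := hc2; rwa [hvb] at h) hvb
      · -- a, b in supports of both walks
        exfalso
        obtain ⟨xa1, hxa1, hfa1⟩ := (hmemw i j hij a).mp ha1
        obtain ⟨xa2, hxa2, hfa2⟩ := (hmemw k l hkl a).mp ha2
        obtain ⟨xb1, hxb1, hfb1⟩ := (hmemw i j hij b).mp hb1
        obtain ⟨xb2, hxb2, hfb2⟩ := (hmemw k l hkl b).mp hb2
        have hea : xa1 = xa2 := hfinj (hfa1.trans hfa2.symm)
        have heb : xb1 = xb2 := hfinj (hfb1.trans hfb2.symm)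
        subst hea; subst heb
        have hxab : xa1 ≠ xb1 := fun hc => hne (hfa1.symm.trans ((congrArg (⇑f) hc).trans hfb1))
        have hne'' : (k, l) ≠ (i, j) := fun hc => hne' (by
          rw [Prod.mk.injEq] at hc ⊢; exact ⟨hc.1.symm, hc.2.symm⟩)
        have d1 := X.disj i j hij k l hkl hne' xa1 hxa1 hxa2
        have d2 := X.disj i j hij k l hkl hne' xb1 hxb1 hxb2
        have d3 := X.disj k l hkl i j hij hne'' xa1 hxa2 hxa1
        have d4 := X.disj k l hkl i j hij hne'' xb1 hxb2 hxb1
        rcases d1 with h1 | h1 <;> rcases d2 with h2 | h2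
        · exact hxab (h1.trans h2.symm)
        · rcases d3 with h3 | h3 <;> rcases d4 with h4 | h4
          · exact hxab (h3.trans h4.symm)
          · exact hne' (by
              rw [Prod.mk.injEq]
              exact ⟨X.inj (h1.symm.trans h3), X.inj (h2.symm.trans h4)⟩)
          · have e1 : i = l := X.inj (h1.symm.trans h3)
            have e2 : j = k := X.inj (h2.symm.trans h4)
            subst e1; subst e2
            exact absurd (hij.trans hkl) (lt_irrefl _)
          · exact hxab (h3.trans h4.symm)
        · rcases d3 with h3 | h3 <;> rcases d4 with h4 | h4
          · exact hxab (h3.trans h4.symm)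
          · have e1 : j = k := X.inj (h1.symm.trans h3)
            have e2 : i = l := X.inj (h2.symm.trans h4)
            subst e1; subst e2
            exact absurd (hij.trans hkl) (lt_irrefl _)
          · exact hne' (by
              rw [Prod.mk.injEq]
              exact ⟨X.inj (h2.symm.trans h4), X.inj (h1.symm.trans h3)⟩)
          · exact hxab (h3.trans h4.symm)
        · exact hxab (h1.trans h2.symm)
  · -- coverV
    intro v
    rcases v.2 with hv | ⟨⟨hat, hbt⟩, hvP, hva, hvb⟩
    · obtain ⟨x, hx⟩ := hv
      obtain ⟨i, j, hij, hmem⟩ := X.coverV x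
      refine ⟨i, j, hij, ?_⟩
      rw [ISK4Aux.mem_induceWalk_support]
      refine ISK4Aux.support_subset_unfoldWalk P (w i j hij) _ ?_
      rw [hmemw i j hij]
      exact ⟨x, hmem, hx⟩
    · obtain ⟨i, j, hij, he⟩ := habEdge hat hbt
      refine ⟨i, j, hij, ?_⟩
      rw [ISK4Aux.mem_induceWalk_support]
      exact (ISK4Aux.unfoldWalk_of_mem_edge P (w i j hij) he).1 _ hvP
  · -- coverE
    intro e he
    induction e using Sym2.ind with
    | _ v v' =>
    have hvw : G.Adj (v : V) (v' : V) := he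
    have main : ∃ (i j : Fin 4) (hij : i < j),
        s((v : V), (v' : V)) ∈ (ISK4Aux.unfoldWalk P (w i j hij)).edges := by
      rcases v.2 with hv | ⟨⟨hat, hbt⟩, hvP, hva, hvb⟩
      · rcases v'.2 with hv' | ⟨⟨hat, hbt⟩, hvP', hva', hvb'⟩
        · -- both in t
          obtain ⟨x, hx⟩ := hv
          obtain ⟨x', hx'⟩ := hv'
          replace hx : f x = (v : V) := hx
          replace hx' : f x' = (v' : V) := hx'
          have hadj : ((Gb.induce {c | c ∉ P.support ∨ c = a ∨ c = b}).induce s).Adj x x' := by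
            show Gb.Adj (f x) (f x')
            rw [hx, hx']
            exact Or.inl hvw
          obtain ⟨i, j, hij, he'⟩ := X.coverE s(x, x') ((SimpleGraph.mem_edgeSet _).mpr hadj)
          refine ⟨i, j, hij, ?_⟩
          refine ISK4Aux.edges_subset_unfoldWalk P (w i j hij) _ ?_ ?_
          · rw [Walk.edges_map]
            have := List.mem_map_of_mem (f := Sym2.map f) he'
            rwa [Sym2.map_pair_eq, hx, hx'] at this
          · intro hc
            rw [Sym2.eq_iff] at hc
            rcases hc with ⟨hc1, hc2⟩ | ⟨hc1, hc2⟩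
            · exact habAdj (hc1 ▸ hc2 ▸ hvw)
            · exact habAdj (hc1 ▸ hc2 ▸ hvw.symm)
        · -- v' interior
          have hPe : s((v' : V), (v : V)) ∈ P.edges :=
            ISK4Aux.flat_interior_edges P hP _ hvP' hva' hvb'
              (hflat _ hvP' hva' hvb') _ hvw.symm
          obtain ⟨i, j, hij, he'⟩ := habEdge hat hbt
          refine ⟨i, j, hij, ?_⟩
          have := (ISK4Aux.unfoldWalk_of_mem_edge P (w i j hij) he').2 _ hPe
          rwa [Sym2.eq_swap] at this
      · -- v interior
        have hPe : s((v : V), (v' : V)) ∈ P.edges :=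
          ISK4Aux.flat_interior_edges P hP _ hvP hva hvb (hflat _ hvP hva hvb) _ hvw
        obtain ⟨i, j, hij, he'⟩ := habEdge hat hbt
        exact ⟨i, j, hij, (ISK4Aux.unfoldWalk_of_mem_edge P (w i j hij) he').2 _ hPe⟩
    obtain ⟨i, j, hij, hmem⟩ := main
    refine ⟨i, j, hij, ?_⟩
    rw [ISK4Aux.mem_induceWalk_edges, Sym2.map_pair_eq]
    exact hmem
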